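/- For the function f(δ, τ) = (1 + exp(δ/τ))^{-1}, there exists k > 0 (namely k = a*/(2 + e^{a*} + e^{−a*}) where a* is the unique positive zero of 2 + e^{a}(1−a) + e^{−a}(1+a)) such that |∂f/∂τ (δ, τ)| ≤ k/τ for all δ ∈ ℝ and τ > 0, with the maximum over δ > 0 attained at δ = a*τ. -/

import Mathlib

open Real

private lemma key16 (astar a : ℝ) (hastar : 0 < astar)
    (hzero : 2 + Real.exp astar * (1 - astar) + Real.exp (-astar) * (1 + astar) = 0) :
    |a| * (2 + Real.exp astar + Real.exp (-astar)) ≤ astar * (2 + Real.exp a + Real.exp (-a)) := by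
  rcases abs_cases a with ⟨h, _⟩ | ⟨h, _⟩ <;> rw [h]
  · have h1 : Real.exp astar * ((a - astar) + 1) ≤ Real.exp a := by
      calc Real.exp astar * ((a - astar) + 1) ≤ Real.exp astar * Real.exp (a - astar) :=
            mul_le_mul_of_nonneg_left (Real.add_one_le_exp _) (Real.exp_pos _).le
        _ = Real.exp a := by rw [← Real.exp_add]; ring_nf
    have h2 : Real.exp (-astar) * ((astar - a) + 1) ≤ Real.exp (-a) := by
      calc Real.exp (-astar) * ((astar - a) + 1) ≤ Real.exp (-astar) * Real.exp (astar - a) :=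
            mul_le_mul_of_nonneg_left (Real.add_one_le_exp _) (Real.exp_pos _).le
        _ = Real.exp (-a) := by rw [← Real.exp_add]; ring_nf
    nlinarith [mul_le_mul_of_nonneg_left h1 hastar.le,
      mul_le_mul_of_nonneg_left h2 hastar.le,
      mul_eq_zero_of_left hzero (astar - a)]
  · have h1 : Real.exp (-astar) * ((a + astar) + 1) ≤ Real.exp a := by
      calc Real.exp (-astar) * ((a + astar) + 1) ≤ Real.exp (-astar) * Real.exp (a + astar) :=
            mul_le_mul_of_nonneg_left (Real.add_one_le_exp _) (Real.exp_pos _).le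
        _ = Real.exp a := by rw [← Real.exp_add]; ring_nf
    have h2 : Real.exp astar * ((-a - astar) + 1) ≤ Real.exp (-a) := by
      calc Real.exp astar * ((-a - astar) + 1) ≤ Real.exp astar * Real.exp (-a - astar) :=
            mul_le_mul_of_nonneg_left (Real.add_one_le_exp _) (Real.exp_pos _).le
        _ = Real.exp (-a) := by rw [← Real.exp_add]; ring_nf
    nlinarith [mul_le_mul_of_nonneg_left h1 hastar.le,
      mul_le_mul_of_nonneg_left h2 hastar.le,
      mul_eq_zero_of_left hzero (astar + a)]

private lemma hd16 (δ τ : ℝ) (hτ : τ ≠ 0) :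
    HasDerivAt (fun t : ℝ => (1 + Real.exp (δ / t))⁻¹)
      ((δ / τ) / (2 + Real.exp (δ / τ) + Real.exp (-(δ / τ))) / τ) τ := by
  have h0 : (1 + Real.exp (δ / τ)) ≠ 0 := by positivity
  have h1 : HasDerivAt (fun t : ℝ => 1 + Real.exp (δ / t))
      (Real.exp (δ / τ) * (δ * -(τ ^ 2)⁻¹)) τ := by
    have := (((hasDerivAt_inv hτ).const_mul δ).exp).const_add 1
    simpa [div_eq_mul_inv] using this
  have h2 := h1.inv h0
  refine h2.congr_deriv ?_
  have hx : (1 + Real.exp (δ / τ)) ^ 2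
      = Real.exp (δ / τ) * (2 + Real.exp (δ / τ) + Real.exp (-(δ / τ))) := by
    have h3 : Real.exp (δ / τ) * Real.exp (-(δ / τ)) = 1 := by
      rw [← Real.exp_add]; simp
    nlinarith [h3]
  rw [hx]
  have he := (Real.exp_pos (δ / τ)).ne'
  have hc : (2 + Real.exp (δ / τ) + Real.exp (-(δ / τ))) ≠ 0 := by positivity
  field_simp

theorem stmt_16 (astar : ℝ) (hastar : 0 < astar)
    (hzero : 2 + Real.exp astar * (1 - astar) + Real.exp (-astar) * (1 + astar) = 0) :
    0 < astar / (2 + Real.exp astar + Real.exp (-astar)) ∧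
    (∀ δ τ : ℝ, 0 < τ →
      |deriv (fun t : ℝ => (1 + Real.exp (δ / t))⁻¹) τ| ≤
        (astar / (2 + Real.exp astar + Real.exp (-astar))) / τ) ∧
    (∀ τ : ℝ, 0 < τ → ∀ δ > (0:ℝ),
      deriv (fun t : ℝ => (1 + Real.exp (δ / t))⁻¹) τ ≤
        deriv (fun t : ℝ => (1 + Real.exp (astar * τ / t))⁻¹) τ) := by
  have hcs : (0:ℝ) < 2 + Real.exp astar + Real.exp (-astar) := by positivity
  have hbound : ∀ δ τ : ℝ, 0 < τ →
      |deriv (fun t : ℝ => (1 + Real.exp (δ / t))⁻¹) τ| ≤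
        (astar / (2 + Real.exp astar + Real.exp (-astar))) / τ := by
    intro δ τ hτ
    rw [(hd16 δ τ hτ.ne').deriv]
    have hc : (0:ℝ) < 2 + Real.exp (δ / τ) + Real.exp (-(δ / τ)) := by positivity
    rw [abs_div, abs_of_pos hτ, div_le_div_iff_of_pos_right hτ, abs_div, abs_of_pos hc,
      div_le_div_iff₀ hc hcs]
    have := key16 astar (δ / τ) hastar hzero
    linarith
  refine ⟨div_pos hastar hcs, hbound, ?_⟩
  intro τ hτ δ hδ
  have hR : deriv (fun t : ℝ => (1 + Real.exp (astar * τ / t))⁻¹) τ =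
      (astar / (2 + Real.exp astar + Real.exp (-astar))) / τ := by
    rw [(hd16 (astar * τ) τ hτ.ne').deriv, mul_div_assoc, div_self hτ.ne', mul_one]
  rw [hR]
  calc deriv (fun t : ℝ => (1 + Real.exp (δ / t))⁻¹) τ
      ≤ |deriv (fun t : ℝ => (1 + Real.exp (δ / t))⁻¹) τ| := le_abs_self _
    _ ≤ _ := hbound δ τ hτ
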